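/- Let X be a compact Hausdorff connected space (a continuum). If X is covered by a countable family of pairwise disjoint closed subsets, at least two of which are nonempty, then X cannot be covered this way; equivalently, if X = ⋃_{i} F_i with the F_i closed and pairwise disjoint, then at most one F_i is nonempty. -/

import Mathlib

open Set

lemma clopen_sep {Y : Type*} [TopologicalSpace Y] [CompactSpace Y] [T2Space Y]
    (x : Y) (K : Set Y) (hK : IsClosed K) (hd : Disjoint (connectedComponent x) K) :
    ∃ W : Set Y, IsClopen W ∧ x ∈ W ∧ Disjoint W K := by
  rw [connectedComponent_eq_iInter_isClopen x, disjoint_comm, disjoint_iff_inter_eq_empty] at hd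
  obtain ⟨t, ht⟩ := hK.isCompact.elim_finite_subfamily_closed
    _ (fun s : { s : Set Y // IsClopen s ∧ x ∈ s } => s.2.1.1) hd
  refine ⟨⋂ i ∈ t, (i : Set Y), isClopen_biInter_finset fun i _ => i.2.1,
    mem_iInter₂.2 fun i _ => i.2.2, disjoint_iff_inter_eq_empty.2 ?_⟩
  rw [inter_comm]
  exact ht

lemma bump {Y : Type*} [TopologicalSpace Y] [CompactSpace Y] [T2Space Y] [ConnectedSpace Y]
    (A B : Set Y) (hA : IsClosed A) (hB : IsClosed B) (hd : Disjoint A B)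
    (hAne : A.Nonempty) (x : Y) (hx : x ∈ B) :
    ∃ D : Set Y, IsClosed D ∧ IsConnected D ∧ Disjoint D A ∧ x ∈ D ∧
      ∃ y ∈ D, y ∉ A ∧ y ∉ B := by
  obtain ⟨U, V, hUo, hVo, hAU, hBV, hUV⟩ := NormalSpace.normal A B hA hB hd
  have hclUV : closure U ⊆ Vᶜ :=
    closure_minimal (subset_compl_iff_disjoint_right.mpr hUV) hVo.isClosed_compl
  have hclUB : Disjoint (closure U) B :=
    subset_compl_iff_disjoint_right.mp fun z hz hzV => hclUV hz (hBV hzV)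
  set S : Set Y := Uᶜ with hSdef
  have hS : IsClosed S := hUo.isClosed_compl
  have hxS : x ∈ S := fun h => hUV.ne_of_mem h (hBV hx) rfl
  haveI : CompactSpace S := isCompact_iff_compactSpace.mp hS.isCompact
  set xS : S := ⟨x, hxS⟩
  have key : ∃ y0 ∈ connectedComponent xS, (y0 : Y) ∈ closure U := by
    by_contra h
    push_neg at h
    have hdisj : Disjoint (connectedComponent xS) ((↑) ⁻¹' closure U : Set S) :=
      disjoint_left.mpr fun z hz hz' => h z hz hz'
    obtain ⟨W, hW, hxW, hWK⟩ := clopen_sep xS _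
      (isClosed_closure.preimage continuous_subtype_val) hdisj
    set V₀ : Set Y := (↑) '' W with hV₀def
    have hV₀closed : IsClosed V₀ :=
      (hW.isClosed.isCompact.image continuous_subtype_val).isClosed
    obtain ⟨O, hO, hOW⟩ := isOpen_induced_iff.mp hW.isOpen
    have hV₀clU : ∀ z ∈ V₀, z ∉ closure U := by
      rintro z ⟨w, hw, rfl⟩ hz
      exact hWK.ne_of_mem hw hz rfl
    have hV₀eq : V₀ = O ∩ (closure U)ᶜ := by
      apply Subset.antisymm
      · rintro z ⟨w, hw, rfl⟩
        refine ⟨by rw [← hOW] at hw; exact hw, hV₀clU _ ⟨w, hw, rfl⟩⟩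
      · rintro z ⟨hzO, hzU⟩
        have hzS : z ∈ S := fun hzU' => hzU (subset_closure hzU')
        exact ⟨⟨z, hzS⟩, by rw [← hOW]; exact hzO, rfl⟩
    have hV₀open : IsOpen V₀ := hV₀eq ▸ hO.inter isClosed_closure.isOpen_compl
    rcases isClopen_iff.mp ⟨hV₀closed, hV₀open⟩ with h0 | h1
    · exact absurd (h0 ▸ ⟨xS, hxW, rfl⟩ : x ∈ (∅ : Set Y)) (notMem_empty x)
    · obtain ⟨a, ha⟩ := hAne
      have : a ∈ V₀ := h1 ▸ mem_univ a
      obtain ⟨w, _, hwa⟩ := this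
      exact w.2 (hwa ▸ hAU ha)
  obtain ⟨y0, hy0, hy0U⟩ := key
  refine ⟨(↑) '' connectedComponent xS,
    (isClosed_connectedComponent.isCompact.image continuous_subtype_val).isClosed,
    isConnected_connectedComponent.image _ continuous_subtype_val.continuousOn,
    disjoint_left.mpr ?_, ⟨xS, mem_connectedComponent, rfl⟩,
    (y0 : Y), ⟨y0, hy0, rfl⟩, fun hyA => y0.2 (hAU hyA), fun hyB => hclUB.ne_of_mem hy0U hyB rfl⟩
  rintro z ⟨w, _, rfl⟩ hzA
  exact w.2 (hAU hzA)

/-- Sierpiński theorem: a continuum (nonempty compact connected Hausdorff space) cannot be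
covered by countably many pairwise disjoint closed sets, more than one of which is nonempty. -/
theorem sierpinski_continuum {X : Type*} [TopologicalSpace X] [CompactSpace X] [T2Space X]
    [ConnectedSpace X] (F : ℕ → Set X) (hcl : ∀ i, IsClosed (F i))
    (hdisj : Pairwise (Function.onFun Disjoint F)) (hcov : ⋃ i, F i = Set.univ) :
    ∀ i j, (F i).Nonempty → (F j).Nonempty → i = j := by
  intro i j hi hj
  by_contra hij
  -- the invariant: a closed connected set meeting at least two members of the family
  set P : Set X → Prop := fun C => IsClosed C ∧ IsConnected C ∧
    ∃ a b, a ≠ b ∧ (C ∩ F a).Nonempty ∧ (C ∩ F b).Nonempty with hPdef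
  have h0 : P univ := ⟨isClosed_univ, isConnected_univ,
    i, j, hij, by simpa using hi, by simpa using hj⟩
  have key : ∀ (n : ℕ) (C : Set X), P C → ∃ C', C' ⊆ C ∧ P C' ∧ Disjoint C' (F n) := by
    rintro n C ⟨hCcl, hCconn, a, b, hab, ha, hb⟩
    by_cases hCn : Disjoint C (F n)
    · exact ⟨C, subset_rfl, ⟨hCcl, hCconn, a, b, hab, ha, hb⟩, hCn⟩
    · obtain ⟨jj, hjn, hjne⟩ : ∃ jj, jj ≠ n ∧ (C ∩ F jj).Nonempty := by
        rcases eq_or_ne a n with rfl | han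
        · exact ⟨b, fun h => hab h.symm, hb⟩
        · exact ⟨a, han, ha⟩
      obtain ⟨x, hxC, hxF⟩ := hjne
      haveI : CompactSpace C := isCompact_iff_compactSpace.mp hCcl.isCompact
      haveI : ConnectedSpace C := Subtype.connectedSpace hCconn
      obtain ⟨z, hzC, hzF⟩ := Set.not_disjoint_iff_nonempty_inter.mp hCn
      obtain ⟨D, hDcl, hDconn, hDA, hxD, y, hyD, hyA, hyB⟩ :=
        bump (Y := C) ((↑) ⁻¹' F n : Set C) (((↑) ⁻¹' F jj : Set C))
          ((hcl n).preimage continuous_subtype_val)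
          ((hcl jj).preimage continuous_subtype_val)
          (Disjoint.preimage _ (hdisj (Ne.symm hjn)))
          (show ((↑) ⁻¹' F n : Set C).Nonempty from ⟨⟨z, hzC⟩, hzF⟩) ⟨x, hxC⟩ (show (⟨x, hxC⟩ : C) ∈ ((↑) ⁻¹' F jj : Set C) from hxF)
      obtain ⟨k, hk⟩ : ∃ k, (y : X) ∈ F k := by
        have : (y : X) ∈ ⋃ i, F i := hcov ▸ mem_univ _
        exact mem_iUnion.mp this
      have hkj : jj ≠ k := fun h => hyB (h ▸ hk)
      refine ⟨(↑) '' D, Subtype.coe_image_subset C D,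
        ⟨(hDcl.isCompact.image continuous_subtype_val).isClosed,
         hDconn.image _ continuous_subtype_val.continuousOn,
         jj, k, hkj, ⟨x, ⟨⟨x, hxC⟩, hxD, rfl⟩, hxF⟩, ⟨y, ⟨y, hyD, rfl⟩, hk⟩⟩, ?_⟩
      rintro T hT1 hT2 w hw
      obtain ⟨w', hw', rfl⟩ := hT1 hw
      exact (hDA.ne_of_mem hw' (hT2 hw) rfl).elim
  choose g hg1 hg2 hg3 using key
  set seq : ℕ → {C : Set X // P C} := fun n =>
    Nat.rec ⟨g 0 univ h0, hg2 0 univ h0⟩ (fun n p => ⟨g (n+1) p.1 p.2, hg2 (n+1) p.1 p.2⟩) n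
    with hseq
  set Z : ℕ → Set X := fun n => (seq n).1 with hZ
  have hsub : ∀ n, Z (n+1) ⊆ Z n := fun n => hg1 (n+1) (seq n).1 (seq n).2
  have hdZ : ∀ n, Disjoint (Z n) (F n) := by
    intro n
    cases n with
    | zero => exact hg3 0 univ h0
    | succ m => exact hg3 (m+1) (seq m).1 (seq m).2
  have hne : ∀ n, (Z n).Nonempty := fun n => (seq n).2.2.1.nonempty
  have hZcl : ∀ n, IsClosed (Z n) := fun n => (seq n).2.1
  obtain ⟨p, hp⟩ := IsCompact.nonempty_iInter_of_sequence_nonempty_isCompact_isClosed Z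
    hsub hne (hZcl 0).isCompact hZcl
  obtain ⟨k, hk⟩ : ∃ k, p ∈ F k := mem_iUnion.mp (hcov ▸ mem_univ p)
  exact hdZ k (singleton_subset_iff.mpr (mem_iInter.mp hp k))
    (singleton_subset_iff.mpr hk) rfl
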